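/- No fixed-price mechanism that uses only the mean of one side's value distribution can guarantee more than 2/3 of the optimal welfare. Precisely: for every Borel probability measure P on [0,∞) (a price distribution) and every r > 2/3, (i) there exists an instance I = (F_S, F_B) with E_{S ~ F_S}[S] = 1 and 0 < OPT(I) < ∞ such that ∫ W(I,p) dP(p) < r · OPT(I); and (ii) there exists an instance I′ = (F′_S, F′_B) with E_{B ~ F′_B}[B] = 1 and 0 < OPT(I′) < ∞ such that ∫ W(I′,p) dP(p) < r · OPT(I′). -/

import Mathlib

open MeasureTheory
set_option linter.unusedSectionVars false
set_option maxHeartbeats 1000000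

namespace Stmt9Aux

variable {α : Type*} [MeasurableSpace α] [MeasurableSingletonClass α]

lemma integrableDirac (f : α → ℝ) (x : α) : Integrable f (Measure.dirac x) :=
  (integrable_const (f x)).congr (MeasureTheory.ae_eq_dirac f).symm

/-- the two-point measure `(1-w)·δ_x + w·δ_y`. -/
noncomputable def mix (w : ℝ) (x y : α) : Measure α :=
  ENNReal.ofReal (1 - w) • Measure.dirac x + ENNReal.ofReal w • Measure.dirac y

lemma mixIntegrable (w : ℝ) (x y : α) (f : α → ℝ) : Integrable f (mix w x y) :=
  ((integrableDirac f x).smul_measure ENNReal.ofReal_ne_top).add_measure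
    ((integrableDirac f y).smul_measure ENNReal.ofReal_ne_top)

lemma mixIntegral (w : ℝ) (hw0 : 0 ≤ w) (hw1 : w ≤ 1) (x y : α) (f : α → ℝ) :
    ∫ z, f z ∂(mix w x y) = (1 - w) * f x + w * f y := by
  rw [mix, integral_add_measure ((integrableDirac f x).smul_measure ENNReal.ofReal_ne_top)
      ((integrableDirac f y).smul_measure ENNReal.ofReal_ne_top),
    integral_smul_measure, integral_smul_measure, integral_dirac, integral_dirac,
    ENNReal.toReal_ofReal (by linarith), ENNReal.toReal_ofReal hw0]
  simp [smul_eq_mul]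

lemma mixProb (w : ℝ) (hw0 : 0 ≤ w) (hw1 : w ≤ 1) (x y : α) :
    IsProbabilityMeasure (mix w x y) := by
  constructor
  simp only [mix, Measure.add_apply, Measure.smul_apply, measure_univ, smul_eq_mul, mul_one]
  rw [← ENNReal.ofReal_add (by linarith) hw0]
  norm_num

lemma mixMap {β : Type*} [MeasurableSpace β] (w : ℝ) (x y : α) {f : α → β}
    (hf : Measurable f) : (mix w x y).map f = mix w (f x) (f y) := by
  simp [mix, Measure.map_add _ _ hf, Measure.map_smul, Measure.map_dirac' hf]

lemma mixApplyZero (w : ℝ) (x y : α) {s : Set α} (hx : x ∉ s) (hy : y ∉ s) :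
    mix w x y s = 0 := by
  simp [mix, Measure.smul_apply, Measure.dirac_apply, Set.indicator_apply, hx, hy]

lemma mixProdDirac (w : ℝ) (hw0 : 0 ≤ w) (hw1 : w ≤ 1) (x y c : ℝ) :
    (mix w x y).prod (Measure.dirac c) = mix w (x, c) (y, c) := by
  haveI := mixProb w hw0 hw1 x y
  rw [Measure.prod_dirac]
  exact mixMap w x y measurable_prodMk_right

lemma diracProdMix (w : ℝ) (hw0 : 0 ≤ w) (hw1 : w ≤ 1) (s x y : ℝ) :
    (Measure.dirac s).prod (mix w x y) = mix w (s, x) (s, y) := by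
  haveI := mixProb w hw0 hw1 x y
  rw [Measure.dirac_prod]
  exact mixMap w x y measurable_prodMk_left

lemma diracIio {a : ℝ} (ha : 0 ≤ a) : Measure.dirac a (Set.Iio 0) = 0 := by
  simp [Measure.dirac_apply, Set.indicator_apply, Set.mem_Iio, not_lt.mpr ha]

lemma integralConstAddIndicator (P : Measure ℝ) [IsProbabilityMeasure P] (c₀ c₁ a b : ℝ) :
    ∫ p, (c₀ + (Set.Icc a b).indicator (fun _ => c₁) p) ∂P
      = c₀ + (P (Set.Icc a b)).toReal * c₁ := by
  rw [integral_add (integrable_const _) ((integrable_const c₁).indicator measurableSet_Icc),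
    integral_const, integral_indicator_const _ measurableSet_Icc]
  simp
  exact Or.inl rfl

lemma measureToRealAddLe (P : Measure ℝ) [IsProbabilityMeasure P] {A B : Set ℝ}
    (hB : MeasurableSet B) (hd : Disjoint A B) :
    (P A).toReal + (P B).toReal ≤ 1 := by
  have h1 : P A + P B = P (A ∪ B) := (measure_union hd hB).symm
  rw [← ENNReal.toReal_add (measure_ne_top P A) (measure_ne_top P B), h1]
  have h2 : (P (A ∪ B)).toReal ≤ (1 : ENNReal).toReal :=
    ENNReal.toReal_mono (by norm_num) prob_le_one
  simpa using h2

end Stmt9Aux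

/-- Expected welfare of the fixed price `p` on the bilateral-trade instance `(μ, ν)`. -/
noncomputable def welfare (μ ν : Measure ℝ) (p : ℝ) : ℝ :=
  ∫ z : ℝ × ℝ, (z.1 + if z.1 ≤ p ∧ p ≤ z.2 then z.2 - z.1 else 0) ∂(μ.prod ν)

/-- Optimal welfare `OPT(I) = E[max(S,B)]`. -/
noncomputable def optWelfare (μ ν : Measure ℝ) : ℝ :=
  ∫ z : ℝ × ℝ, max z.1 z.2 ∂(μ.prod ν)

open Stmt9Aux

theorem stmt_9 (P : Measure ℝ) [IsProbabilityMeasure P] (hP : P (Set.Iio 0) = 0)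
    (r : ℝ) (hr : 2 / 3 < r) :
    (∃ μ ν : Measure ℝ, IsProbabilityMeasure μ ∧ IsProbabilityMeasure ν ∧
      μ (Set.Iio 0) = 0 ∧ ν (Set.Iio 0) = 0 ∧
      Integrable id μ ∧ Integrable id ν ∧ (∫ s, s ∂μ) = 1 ∧
      Integrable (fun z : ℝ × ℝ => max z.1 z.2) (μ.prod ν) ∧
      0 < optWelfare μ ν ∧
      (∫ p, welfare μ ν p ∂P) < r * optWelfare μ ν) ∧
    (∃ μ' ν' : Measure ℝ, IsProbabilityMeasure μ' ∧ IsProbabilityMeasure ν' ∧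
      μ' (Set.Iio 0) = 0 ∧ ν' (Set.Iio 0) = 0 ∧
      Integrable id μ' ∧ Integrable id ν' ∧ (∫ b, b ∂ν') = 1 ∧
      Integrable (fun z : ℝ × ℝ => max z.1 z.2) (μ'.prod ν') ∧
      0 < optWelfare μ' ν' ∧
      (∫ p, welfare μ' ν' p ∂P) < r * optWelfare μ' ν') := by
  have h32 : 0 < 3 * r - 2 := by linarith
  constructor
  · -- Part (i): seller mean 1
    set Q : ℝ := (P (Set.Ici (1:ℝ))).toReal with hQdef
    have hQ0 : 0 ≤ Q := ENNReal.toReal_nonneg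
    have hQ1 : Q ≤ 1 := by
      have h := ENNReal.toReal_mono (by norm_num : (1:ENNReal) ≠ ⊤)
        (prob_le_one (μ := P) (s := Set.Ici 1))
      simpa using h
    by_cases hQr : Q < r
    · -- Case A: prices rarely above 1; use S = δ_1, B = δ_b with b large
      set b : ℝ := max 2 ((1 - Q) / (r - Q) + 1) with hbdef
      have hb2 : (2:ℝ) ≤ b := le_max_left _ _
      have hbge : (1 - Q) / (r - Q) + 1 ≤ b := le_max_right _ _
      have hopt : optWelfare (Measure.dirac 1) (Measure.dirac b) = b := by
        rw [optWelfare, Measure.dirac_prod_dirac, integral_dirac]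
        show max (1:ℝ) b = b
        exact max_eq_right (by linarith)
      have hwf : ∀ p, welfare (Measure.dirac 1) (Measure.dirac b) p
          = 1 + (Set.Icc 1 b).indicator (fun _ => b - 1) p := by
        intro p
        rw [welfare, Measure.dirac_prod_dirac, integral_dirac]
        by_cases h : (1:ℝ) ≤ p ∧ p ≤ b
        · simp [Set.indicator_apply, Set.mem_Icc, h]
        · simp [Set.indicator_apply, Set.mem_Icc, h]
      have hint : (∫ p, welfare (Measure.dirac 1) (Measure.dirac b) p ∂P)
          = 1 + (P (Set.Icc 1 b)).toReal * (b - 1) := by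
        simp only [hwf]
        exact integralConstAddIndicator P 1 (b - 1) 1 b
      have hqI : (P (Set.Icc 1 b)).toReal ≤ Q :=
        ENNReal.toReal_mono (measure_ne_top P _)
          (measure_mono (fun x hx => hx.1))
      have hq0 : 0 ≤ (P (Set.Icc 1 b)).toReal := ENNReal.toReal_nonneg
      have hkey : 1 - Q ≤ (b - 1) * (r - Q) := by
        have hrQ : (0:ℝ) < r - Q := by linarith
        have h := (div_le_iff₀ hrQ).mp (by linarith : (1 - Q) / (r - Q) ≤ b - 1)
        linarith
      refine ⟨Measure.dirac 1, Measure.dirac b, inferInstance, inferInstance,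
        diracIio (by norm_num), diracIio (by linarith),
        integrableDirac _ _, integrableDirac _ _, by simp [integral_dirac], ?_, ?_, ?_⟩
      · rw [Measure.dirac_prod_dirac]; exact integrableDirac _ _
      · rw [hopt]; linarith
      · rw [hint, hopt]
        nlinarith [mul_le_mul_of_nonneg_right hqI (show (0:ℝ) ≤ b - 1 by linarith)]
    · -- Case B: prices often ≥ 1; use S ∈ {0, 1/ε}, B = δ_{1-ε}
      have hrQ : r ≤ Q := not_lt.mp hQr
      have hrle : r ≤ 1 := le_trans hrQ hQ1
      set ε : ℝ := min (1/4) ((3 * r - 2) / 4) with hεdef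
      have hε0 : 0 < ε := lt_min (by norm_num) (by linarith)
      have hε4 : ε ≤ 1/4 := min_le_left _ _
      have hεr : ε ≤ (3 * r - 2) / 4 := min_le_right _ _
      have hε1 : ε ≤ 1 := by linarith
      set M : ℝ := ε⁻¹ with hMdef
      have hM : ε * M = 1 := mul_inv_cancel₀ (ne_of_gt hε0)
      have hM0 : 0 ≤ M := inv_nonneg.mpr hε0.le
      have hM4 : 4 ≤ M := by
        nlinarith [mul_nonneg (show (0:ℝ) ≤ 1/4 - ε by linarith) hM0]
      have hprod : (mix ε 0 M).prod (Measure.dirac (1 - ε)) = mix ε (0, 1 - ε) (M, 1 - ε) :=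
        mixProdDirac ε hε0.le hε1 0 M (1 - ε)
      have hopt : optWelfare (mix ε 0 M) (Measure.dirac (1 - ε)) = (1 - ε) * (1 - ε) + 1 := by
        have h : (∫ z : ℝ × ℝ, max z.1 z.2 ∂(mix ε ((0:ℝ), 1 - ε) (M, 1 - ε)))
            = (1 - ε) * max 0 (1 - ε) + ε * max M (1 - ε) :=
          mixIntegral ε hε0.le hε1 _ _ _
        rw [optWelfare, hprod, h, max_eq_right (by linarith : (0:ℝ) ≤ 1 - ε),
          max_eq_left (by linarith : (1:ℝ) - ε ≤ M), hM]
      have hwf : ∀ p, welfare (mix ε 0 M) (Measure.dirac (1 - ε)) p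
          = 1 + (Set.Icc 0 (1 - ε)).indicator (fun _ => (1 - ε) * (1 - ε)) p := by
        intro p
        have h : welfare (mix ε 0 M) (Measure.dirac (1 - ε)) p
            = (1 - ε) * (0 + if (0:ℝ) ≤ p ∧ p ≤ 1 - ε then (1 - ε) - 0 else 0)
              + ε * (M + if M ≤ p ∧ p ≤ 1 - ε then (1 - ε) - M else 0) := by
          rw [welfare, hprod]
          exact mixIntegral ε hε0.le hε1 _ _ _
        rw [h, if_neg (fun hcon => by linarith [le_trans hcon.1 hcon.2] : ¬(M ≤ p ∧ p ≤ 1 - ε))]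
        by_cases hp : p ∈ Set.Icc (0:ℝ) (1 - ε)
        · rw [Set.mem_Icc] at hp
          rw [if_pos hp, Set.indicator_of_mem (Set.mem_Icc.mpr hp)]
          nlinarith [hM]
        · rw [if_neg (by rwa [Set.mem_Icc] at hp), Set.indicator_of_notMem hp]
          nlinarith [hM]
      have hint : (∫ p, welfare (mix ε 0 M) (Measure.dirac (1 - ε)) p ∂P)
          = 1 + (P (Set.Icc 0 (1 - ε))).toReal * ((1 - ε) * (1 - ε)) := by
        simp only [hwf]
        exact integralConstAddIndicator P 1 ((1 - ε) * (1 - ε)) 0 (1 - ε)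
      have hdisj : Disjoint (Set.Icc (0:ℝ) (1 - ε)) (Set.Ici (1:ℝ)) := by
        rw [Set.disjoint_left]
        intro x hx hx'
        rw [Set.mem_Icc] at hx
        rw [Set.mem_Ici] at hx'
        linarith [hx.2]
      have hsum := measureToRealAddLe P measurableSet_Ici hdisj
      have hq0 : 0 ≤ (P (Set.Icc (0:ℝ) (1 - ε))).toReal := ENNReal.toReal_nonneg
      have hqr : (P (Set.Icc (0:ℝ) (1 - ε))).toReal ≤ 1 - r := by
        rw [← hQdef] at hsum; linarith
      refine ⟨mix ε 0 M, Measure.dirac (1 - ε), mixProb ε hε0.le hε1 0 M, inferInstance,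
        mixApplyZero ε 0 M (by simp) (by simp [Set.mem_Iio, not_lt]; linarith),
        diracIio (by linarith), mixIntegrable _ _ _ _, integrableDirac _ _, ?_, ?_, ?_, ?_⟩
      · have hmean : (∫ s, s ∂(mix ε 0 M)) = (1 - ε) * 0 + ε * M :=
          mixIntegral ε hε0.le hε1 0 M (fun s => s)
        rw [hmean]; linarith
      · rw [hprod]; exact mixIntegrable _ _ _ _
      · rw [hopt]; nlinarith
      · rw [hint, hopt]
        have hqt : (P (Set.Icc (0:ℝ) (1 - ε))).toReal * ((1 - ε) * (1 - ε))
            ≤ (1 - r) * ((1 - ε) * (1 - ε)) :=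
          mul_le_mul_of_nonneg_right hqr (by nlinarith)
        nlinarith [hqt, sq_nonneg ε, mul_pos hε0 hε0]
  · -- Part (ii): buyer mean 1
    set Q : ℝ := (P (Set.Icc (0:ℝ) 1)).toReal with hQdef
    have hQ0 : 0 ≤ Q := ENNReal.toReal_nonneg
    have hQ1 : Q ≤ 1 := by
      have h := ENNReal.toReal_mono (by norm_num : (1:ENNReal) ≠ ⊤)
        (prob_le_one (μ := P) (s := Set.Icc 0 1))
      simpa using h
    by_cases hQr : Q < r
    · -- Case A: S = δ_0, B = δ_1
      have hopt : optWelfare (Measure.dirac 0) (Measure.dirac 1) = 1 := by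
        rw [optWelfare, Measure.dirac_prod_dirac, integral_dirac]
        show max (0:ℝ) 1 = 1
        exact max_eq_right (by norm_num)
      have hwf : ∀ p, welfare (Measure.dirac 0) (Measure.dirac 1) p
          = 0 + (Set.Icc 0 1).indicator (fun _ => (1:ℝ)) p := by
        intro p
        rw [welfare, Measure.dirac_prod_dirac, integral_dirac]
        by_cases h : (0:ℝ) ≤ p ∧ p ≤ 1
        · simp [Set.indicator_apply, Set.mem_Icc, h]
        · simp [Set.indicator_apply, Set.mem_Icc, h]
      have hint : (∫ p, welfare (Measure.dirac 0) (Measure.dirac 1) p ∂P)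
          = 0 + (P (Set.Icc 0 1)).toReal * 1 := by
        simp only [hwf]
        exact integralConstAddIndicator P 0 1 0 1
      refine ⟨Measure.dirac 0, Measure.dirac 1, inferInstance, inferInstance,
        diracIio le_rfl, diracIio (by norm_num),
        integrableDirac _ _, integrableDirac _ _, by simp [integral_dirac], ?_, ?_, ?_⟩
      · rw [Measure.dirac_prod_dirac]; exact integrableDirac _ _
      · rw [hopt]; norm_num
      · rw [hint, hopt, ← hQdef]; linarith
    · -- Case B: B ∈ {0, 1/ε}, S = δ_{1+ε}
      have hrQ : r ≤ Q := not_lt.mp hQr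
      have hrle : r ≤ 1 := le_trans hrQ hQ1
      set ε : ℝ := min (1/2) ((3 * r - 2) / 4) with hεdef
      have hε0 : 0 < ε := lt_min (by norm_num) (by linarith)
      have hε2 : ε ≤ 1/2 := min_le_left _ _
      have hεr : ε ≤ (3 * r - 2) / 4 := min_le_right _ _
      have hε1 : ε ≤ 1 := by linarith
      set M : ℝ := ε⁻¹ with hMdef
      have hM : ε * M = 1 := mul_inv_cancel₀ (ne_of_gt hε0)
      have hM0 : 0 ≤ M := inv_nonneg.mpr hε0.le
      have hM2 : 2 ≤ M := by
        nlinarith [mul_nonneg (show (0:ℝ) ≤ 1/2 - ε by linarith) hM0]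
      have hsM : 1 + ε ≤ M := by linarith
      have hprod : (Measure.dirac (1 + ε)).prod (mix ε 0 M) = mix ε (1 + ε, 0) (1 + ε, M) :=
        diracProdMix ε hε0.le hε1 (1 + ε) 0 M
      have hopt : optWelfare (Measure.dirac (1 + ε)) (mix ε 0 M)
          = (1 - ε) * (1 + ε) + 1 := by
        have h : (∫ z : ℝ × ℝ, max z.1 z.2 ∂(mix ε ((1:ℝ) + ε, (0:ℝ)) (1 + ε, M)))
            = (1 - ε) * max (1 + ε) 0 + ε * max (1 + ε) M :=
          mixIntegral ε hε0.le hε1 _ _ _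
        rw [optWelfare, hprod, h, max_eq_left (by linarith : (0:ℝ) ≤ 1 + ε),
          max_eq_right hsM, hM]
      have hwf : ∀ p, welfare (Measure.dirac (1 + ε)) (mix ε 0 M) p
          = (1 + ε) + (Set.Icc (1 + ε) M).indicator (fun _ => ε * (M - (1 + ε))) p := by
        intro p
        have h : welfare (Measure.dirac (1 + ε)) (mix ε 0 M) p
            = (1 - ε) * ((1 + ε) + if 1 + ε ≤ p ∧ p ≤ 0 then 0 - (1 + ε) else 0)
              + ε * ((1 + ε) + if 1 + ε ≤ p ∧ p ≤ M then M - (1 + ε) else 0) := by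
          rw [welfare, hprod]
          exact mixIntegral ε hε0.le hε1 _ _ _
        rw [h, if_neg (fun hcon => by linarith [le_trans hcon.1 hcon.2] : ¬(1 + ε ≤ p ∧ p ≤ 0))]
        by_cases hp : p ∈ Set.Icc (1 + ε) M
        · rw [Set.mem_Icc] at hp
          rw [if_pos hp, Set.indicator_of_mem (Set.mem_Icc.mpr hp)]
          ring
        · rw [if_neg (by rwa [Set.mem_Icc] at hp), Set.indicator_of_notMem hp]
          ring
      have hint : (∫ p, welfare (Measure.dirac (1 + ε)) (mix ε 0 M) p ∂P)
          = (1 + ε) + (P (Set.Icc (1 + ε) M)).toReal * (ε * (M - (1 + ε))) := by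
        simp only [hwf]
        exact integralConstAddIndicator P (1 + ε) (ε * (M - (1 + ε))) (1 + ε) M
      have hc₁ : ε * (M - (1 + ε)) = 1 - ε * (1 + ε) := by linear_combination hM
      have hdisj : Disjoint (Set.Icc (1 + ε) M) (Set.Icc (0:ℝ) 1) := by
        rw [Set.disjoint_left]
        intro x hx hx'
        rw [Set.mem_Icc] at hx hx'
        linarith [hx.1, hx'.2]
      have hsum := measureToRealAddLe P measurableSet_Icc hdisj
      have hq0 : 0 ≤ (P (Set.Icc (1 + ε) M)).toReal := ENNReal.toReal_nonneg
      have hqr : (P (Set.Icc (1 + ε) M)).toReal ≤ 1 - r := by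
        rw [← hQdef] at hsum; linarith
      refine ⟨Measure.dirac (1 + ε), mix ε 0 M, inferInstance, mixProb ε hε0.le hε1 0 M,
        diracIio (by linarith),
        mixApplyZero ε 0 M (by simp) (by simp [Set.mem_Iio, not_lt]; linarith),
        integrableDirac _ _, mixIntegrable _ _ _ _, ?_, ?_, ?_, ?_⟩
      · have hmean : (∫ b, b ∂(mix ε 0 M)) = (1 - ε) * 0 + ε * M :=
          mixIntegral ε hε0.le hε1 0 M (fun b => b)
        rw [hmean]; linarith
      · rw [hprod]; exact mixIntegrable _ _ _ _
      · rw [hopt]; nlinarith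
      · rw [hint, hopt, hc₁]
        have hc0 : (0:ℝ) ≤ 1 - ε * (1 + ε) := by nlinarith
        have hqt : (P (Set.Icc (1 + ε) M)).toReal * (1 - ε * (1 + ε))
            ≤ (1 - r) * (1 - ε * (1 + ε)) :=
          mul_le_mul_of_nonneg_right hqr hc0
        nlinarith [hqt, sq_nonneg ε, mul_pos hε0 hε0]
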